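/- For even integer p = 2m ≥ 4, and independent Rademacher variables, the moments E[((r_1+⋯+r_n)/√n)^{2m}] are increasing in n and converge to (2m)!/(2^m m!) as n → ∞. -/

import Mathlib

open Finset Filter

noncomputable def sgnR (b : Bool) : ℝ := if b then 1 else -1

lemma sgnR_not (b : Bool) : sgnR (!b) = - sgnR b := by cases b <;> simp [sgnR]

noncomputable def SQ (m N : ℕ) (a : Fin N → ℝ) : ℝ :=
  ∑ ε : Fin N → Bool, (∑ j, sgnR (ε j) * a j) ^ (2*m)


/-- Sum over even/odd with the (1 + (-1)^j) trick. -/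
lemma evenOdd_sum (M : ℕ) (F : ℕ → ℝ) :
    ∑ j ∈ range (2*M+1), (1 + (-1:ℝ)^j) * F j = ∑ r ∈ range (M+1), 2 * F (2*r) := by
  induction M with
  | zero => norm_num
  | succ M ih =>
      have h1 : 2*(M+1)+1 = (2*M+1) + 1 + 1 := by ring
      rw [h1, Finset.sum_range_succ, Finset.sum_range_succ, ih, Finset.sum_range_succ]
      have e1 : ((-1:ℝ))^(2*M+1) = -1 := by
        rw [pow_succ, pow_mul]; simp
      have e2 : ((-1:ℝ))^(2*M+1+1) = 1 := by
        rw [pow_succ, e1]; ring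
      rw [e1, e2]
      have : 2*M+1+1 = 2*(M+1) := by ring
      rw [this, Finset.sum_range_succ _ (M+1), Finset.sum_range_succ _ M]; ring

/-- (R+w)^{2M} + (R-w)^{2M} as an even-power sum. -/
lemma pm_expand (M : ℕ) (R w : ℝ) :
    (R+w)^(2*M) + (R-w)^(2*M)
      = ∑ r ∈ range (M+1), 2 * (Nat.choose (2*M) (2*r) : ℝ) * R^(2*M - 2*r) * w^(2*r) := by
  have h1 : (R+w)^(2*M) = ∑ j ∈ range (2*M+1), w^j * R^(2*M-j) * (Nat.choose (2*M) j : ℝ) := by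
    rw [add_comm R w, add_pow]
  have h2 : (R-w)^(2*M) = ∑ j ∈ range (2*M+1), (-1:ℝ)^j * (w^j * R^(2*M-j) * (Nat.choose (2*M) j : ℝ)) := by
    have : R - w = -w + R := by ring
    rw [this, add_pow]
    apply Finset.sum_congr rfl
    intro j _
    rw [neg_pow]
    ring
  rw [h1, h2, ← Finset.sum_add_distrib]
  have h3 : ∀ j ∈ range (2*M+1),
      w^j * R^(2*M-j) * (Nat.choose (2*M) j : ℝ)
        + (-1:ℝ)^j * (w^j * R^(2*M-j) * (Nat.choose (2*M) j : ℝ))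
      = (1 + (-1:ℝ)^j) * (w^j * R^(2*M-j) * (Nat.choose (2*M) j : ℝ)) := by
    intro j _; ring
  rw [Finset.sum_congr rfl h3, evenOdd_sum M (fun j => w^j * R^(2*M-j) * (Nat.choose (2*M) j : ℝ))]
  apply Finset.sum_congr rfl
  intro r _
  ring

/-- key scalar monotonicity: with x²+y² fixed and (xy)² increased,
    (x+y)^{2r} + (x-y)^{2r} doesn't decrease. -/
lemma pairPow_mono (r : ℕ) {x y x' y' : ℝ} (h1 : x^2 + y^2 = x'^2 + y'^2)
    (h2 : (x*y)^2 ≤ (x'*y')^2) :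
    (x+y)^(2*r) + (x-y)^(2*r) ≤ (x'+y')^(2*r) + (x'-y')^(2*r) := by
  have expand : ∀ u v : ℝ, (u+v)^(2*r) + (u-v)^(2*r)
      = ∑ k ∈ range (r+1), (1 + (-1:ℝ)^k) * ((2*u*v)^k * (u^2+v^2)^(r-k) * (Nat.choose r k : ℝ)) := by
    intro u v
    have e1 : (u+v)^(2*r) = ((u^2+v^2) + 2*u*v)^r := by
      rw [pow_mul]; ring_nf
    have e2 : (u-v)^(2*r) = ((u^2+v^2) - 2*u*v)^r := by
      rw [pow_mul]; ring_nf
    have e3 : ((u^2+v^2) + 2*u*v)^r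
        = ∑ k ∈ range (r+1), (2*u*v)^k * (u^2+v^2)^(r-k) * (Nat.choose r k : ℝ) := by
      rw [add_comm, add_pow]
    have e4 : ((u^2+v^2) - 2*u*v)^r
        = ∑ k ∈ range (r+1), (-1:ℝ)^k * ((2*u*v)^k * (u^2+v^2)^(r-k) * (Nat.choose r k : ℝ)) := by
      have : (u^2+v^2) - 2*u*v = (-(2*u*v)) + (u^2+v^2) := by ring
      rw [this, add_pow]
      apply Finset.sum_congr rfl
      intro k _
      rw [neg_pow]; ring
    rw [e1, e2, e3, e4, ← Finset.sum_add_distrib]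
    apply Finset.sum_congr rfl
    intro k _; ring
  rw [expand x y, expand x' y']
  apply Finset.sum_le_sum
  intro k _
  rcases Nat.even_or_odd k with he | ho
  · obtain ⟨l, rfl⟩ := he
    have hl : l + l = 2*l := by ring
    rw [hl]
    have hpow : ∀ u v : ℝ, (2*u*v)^(2*l) = (4*(u*v)^2)^l := by
      intro u v
      rw [pow_mul]; ring_nf
    rw [hpow, hpow, h1]
    have hc : (0:ℝ) ≤ 1 + (-1:ℝ)^(2*l) := by
      rw [pow_mul]; norm_num
    apply mul_le_mul_of_nonneg_left _ hc
    apply mul_le_mul_of_nonneg_right _ (by positivity)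
    apply mul_le_mul_of_nonneg_right _ (by positivity)
    apply pow_le_pow_left₀ (by positivity) (by linarith) l
  · have : (-1:ℝ)^k = -1 := Odd.neg_one_pow ho
    rw [this]
    norm_num

-- flip as bijection on (Fin N → Bool)
lemma sum_flip {N : ℕ} (p : Fin N) (F : (Fin N → Bool) → ℝ) :
    ∑ ε : Fin N → Bool, F ε = ∑ ε : Fin N → Bool, F (Function.update ε p (!(ε p))) := by
  apply Fintype.sum_bijective (fun ε => Function.update ε p (!(ε p)))
  · constructor
    · intro ε1 ε2 h
      funext k
      by_cases hk : k = p
      · subst hk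
        have := congrFun h k
        simpa using this
      · have := congrFun h k
        simpa [Function.update_of_ne hk] using this
    · intro ε
      refine ⟨Function.update ε p (!(ε p)), ?_⟩
      funext k
      by_cases hk : k = p
      · subst hk; simp
      · simp [Function.update_of_ne hk]
  · intro ε
    congr 1
    funext k
    by_cases hk : k = p
    · subst hk; simp
    · simp [Function.update_of_ne hk]

lemma swapMono (m N : ℕ) (a : Fin N → ℝ) (p q : Fin N) (hpq : p ≠ q)
    (x y x' y' : ℝ) (h1 : x^2+y^2 = x'^2+y'^2) (h2 : (x*y)^2 ≤ (x'*y')^2) :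
    SQ m N (Function.update (Function.update a p x) q y)
      ≤ SQ m N (Function.update (Function.update a p x') q y') := by
  classical
  set s : Finset (Fin N) := (Finset.univ.erase q).erase p with hs
  set R : (Fin N → Bool) → ℝ := fun ε => ∑ k ∈ s, sgnR (ε k) * a k with hR
  -- membership facts
  have hps : p ∈ Finset.univ.erase q := Finset.mem_erase.2 ⟨hpq, Finset.mem_univ p⟩
  have hknotpq : ∀ k ∈ s, k ≠ p ∧ k ≠ q := by
    intro k hk
    rw [hs, Finset.mem_erase, Finset.mem_erase] at hk
    exact ⟨hk.1, hk.2.1⟩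
  -- key1
  have key1 : ∀ u v : ℝ,
      SQ m N (Function.update (Function.update a p u) q v)
        = ∑ ε : Fin N → Bool, (sgnR (ε p) * u + sgnR (ε q) * v + R ε) ^ (2*m) := by
    intro u v
    apply Finset.sum_congr rfl
    intro ε _
    congr 1
    set c := Function.update (Function.update a p u) q v with hc
    have hcq : c q = v := by simp [hc]
    have hcp : c p = u := by
      rw [hc, Function.update_of_ne hpq, Function.update_self]
    have hck : ∀ k ∈ s, c k = a k := by
      intro k hk
      obtain ⟨hk1, hk2⟩ := hknotpq k hk
      rw [hc, Function.update_of_ne hk2, Function.update_of_ne hk1]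
    rw [← Finset.add_sum_erase Finset.univ (fun k => sgnR (ε k) * c k) (Finset.mem_univ q),
        ← Finset.add_sum_erase _ (fun k => sgnR (ε k) * c k) hps]
    rw [hcq, hcp]
    have : ∑ k ∈ s, sgnR (ε k) * c k = R ε := by
      apply Finset.sum_congr rfl
      intro k hk
      rw [hck k hk]
    rw [← hs, this]
    ring
  -- R is invariant under flips at p and q
  have hRflip : ∀ (t : Fin N) (ht : t = p ∨ t = q) (ε : Fin N → Bool),
      R (Function.update ε t (!(ε t))) = R ε := by
    intro t ht ε
    apply Finset.sum_congr rfl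
    intro k hk
    obtain ⟨hk1, hk2⟩ := hknotpq k hk
    have hkt : k ≠ t := by rcases ht with rfl | rfl <;> assumption
    rw [Function.update_of_ne hkt]
  -- four flip identities
  have flips : ∀ u v : ℝ,
      4 * (∑ ε : Fin N → Bool, (sgnR (ε p) * u + sgnR (ε q) * v + R ε) ^ (2*m))
      = ∑ ε : Fin N → Bool,
          ((R ε + (u+v))^(2*m) + (R ε - (u+v))^(2*m)
           + ((R ε + (u-v))^(2*m) + (R ε - (u-v))^(2*m))) := by
    intro u v
    have fP : (∑ ε : Fin N → Bool, (sgnR (ε p) * u + sgnR (ε q) * v + R ε) ^ (2*m))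
        = ∑ ε : Fin N → Bool, (-(sgnR (ε p)) * u + sgnR (ε q) * v + R ε) ^ (2*m) := by
      rw [sum_flip p]
      apply Finset.sum_congr rfl
      intro ε _
      rw [hRflip p (Or.inl rfl) ε, Function.update_self, sgnR_not,
          Function.update_of_ne (Ne.symm hpq)]
    have fQ : (∑ ε : Fin N → Bool, (sgnR (ε p) * u + sgnR (ε q) * v + R ε) ^ (2*m))
        = ∑ ε : Fin N → Bool, (sgnR (ε p) * u + (-(sgnR (ε q))) * v + R ε) ^ (2*m) := by
      rw [sum_flip q]
      apply Finset.sum_congr rfl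
      intro ε _
      rw [hRflip q (Or.inr rfl) ε, Function.update_self, sgnR_not,
          Function.update_of_ne hpq]
    have fPQ : (∑ ε : Fin N → Bool, (sgnR (ε p) * u + sgnR (ε q) * v + R ε) ^ (2*m))
        = ∑ ε : Fin N → Bool, (-(sgnR (ε p)) * u + (-(sgnR (ε q))) * v + R ε) ^ (2*m) := by
      rw [fP, sum_flip q]
      apply Finset.sum_congr rfl
      intro ε _
      rw [hRflip q (Or.inr rfl) ε, Function.update_self, sgnR_not,
          Function.update_of_ne hpq]
    have hfour : (4:ℝ) * (∑ ε : Fin N → Bool, (sgnR (ε p) * u + sgnR (ε q) * v + R ε) ^ (2*m))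
        = (∑ ε : Fin N → Bool, (sgnR (ε p) * u + sgnR (ε q) * v + R ε) ^ (2*m))
          + ((∑ ε : Fin N → Bool, (-(sgnR (ε p)) * u + sgnR (ε q) * v + R ε) ^ (2*m))
          + ((∑ ε : Fin N → Bool, (sgnR (ε p) * u + (-(sgnR (ε q))) * v + R ε) ^ (2*m))
          + (∑ ε : Fin N → Bool, (-(sgnR (ε p)) * u + (-(sgnR (ε q))) * v + R ε) ^ (2*m)))) := by
      rw [← fP, ← fQ, ← fPQ]; ring
    rw [hfour, ← Finset.sum_add_distrib, ← Finset.sum_add_distrib, ← Finset.sum_add_distrib]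
    apply Finset.sum_congr rfl
    intro ε _
    cases hp : ε p <;> cases hq : ε q <;> simp [sgnR] <;> ring
  -- pointwise comparison of the quadruple
  have point : ∀ Rv : ℝ,
      (Rv + (x+y))^(2*m) + (Rv - (x+y))^(2*m) + ((Rv + (x-y))^(2*m) + (Rv - (x-y))^(2*m))
      ≤ (Rv + (x'+y'))^(2*m) + (Rv - (x'+y'))^(2*m) + ((Rv + (x'-y'))^(2*m) + (Rv - (x'-y'))^(2*m)) := by
    intro Rv
    rw [pm_expand m Rv (x+y), pm_expand m Rv (x-y), pm_expand m Rv (x'+y'), pm_expand m Rv (x'-y'),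
        ← Finset.sum_add_distrib, ← Finset.sum_add_distrib]
    apply Finset.sum_le_sum
    intro r _
    have hfac : (0:ℝ) ≤ 2 * (Nat.choose (2*m) (2*r) : ℝ) * Rv^(2*m - 2*r) := by
      have h2r : Even (2*m - 2*r) := by
        rw [← Nat.mul_sub]
        exact even_two_mul _
      have := h2r.pow_nonneg Rv
      positivity
    have := pairPow_mono r h1 h2
    calc 2 * (Nat.choose (2*m) (2*r) : ℝ) * Rv^(2*m - 2*r) * (x+y)^(2*r)
          + 2 * (Nat.choose (2*m) (2*r) : ℝ) * Rv^(2*m - 2*r) * (x-y)^(2*r)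
        = 2 * (Nat.choose (2*m) (2*r) : ℝ) * Rv^(2*m - 2*r) * ((x+y)^(2*r) + (x-y)^(2*r)) := by ring
      _ ≤ 2 * (Nat.choose (2*m) (2*r) : ℝ) * Rv^(2*m - 2*r) * ((x'+y')^(2*r) + (x'-y')^(2*r)) :=
          mul_le_mul_of_nonneg_left this hfac
      _ = 2 * (Nat.choose (2*m) (2*r) : ℝ) * Rv^(2*m - 2*r) * (x'+y')^(2*r)
          + 2 * (Nat.choose (2*m) (2*r) : ℝ) * Rv^(2*m - 2*r) * (x'-y')^(2*r) := by ring
  -- assemble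
  have h4 : 4 * SQ m N (Function.update (Function.update a p x) q y)
      ≤ 4 * SQ m N (Function.update (Function.update a p x') q y') := by
    rw [key1 x y, key1 x' y', flips x y, flips x' y']
    exact Finset.sum_le_sum (fun ε _ => point (R ε))
  linarith

lemma SQ_succ_split (m n : ℕ) (a : Fin (n+1) → ℝ) :
    SQ m (n+1) a = ∑ b : Bool, ∑ ε : Fin n → Bool,
      (sgnR b * a 0 + ∑ j : Fin n, sgnR (ε j) * a j.succ) ^ (2*m) := by
  rw [SQ, ← Equiv.sum_comp (Fin.consEquiv (fun _ : Fin (n+1) => Bool))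
      (fun ε => (∑ j, sgnR (ε j) * a j) ^ (2*m)), Fintype.sum_prod_type]
  apply Finset.sum_congr rfl
  intro b _
  apply Finset.sum_congr rfl
  intro ε _
  congr 1
  rw [Fin.sum_univ_succ]
  simp [Fin.consEquiv]

noncomputable def pw (n i : ℕ) : Fin (n+1) → ℝ := fun k =>
  if (k:ℕ) = 0 then Real.sqrt (i/(n*(n+1)))
  else if (k:ℕ) ≤ i then Real.sqrt (1/(n+1)) else Real.sqrt (1/n)

lemma pw_zero (n : ℕ) :
    pw n 0 = fun k : Fin (n+1) => if (k:ℕ) = 0 then 0 else Real.sqrt (1/n) := by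
  funext k
  by_cases h : (k:ℕ) = 0
  · simp [pw, h]
  · have h2 : ¬ ((k:ℕ) ≤ 0) := by omega
    rw [pw, if_neg h, if_neg h2, if_neg h]

lemma pw_last (n : ℕ) (hn : 1 ≤ n) : pw n n = fun _ : Fin (n+1) => Real.sqrt (1/(n+1)) := by
  funext k
  by_cases h : (k:ℕ) = 0
  · have hne : (n:ℝ) ≠ 0 := by
      have : (1:ℝ) ≤ (n:ℝ) := by exact_mod_cast hn
      linarith
    have harg : (n:ℝ)/(n*(n+1)) = 1/(n+1) := by
      rw [div_eq_div_iff (by positivity) (by positivity)]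
      ring
    rw [pw, if_pos h, harg]
  · have hk : (k:ℕ) ≤ n := by omega
    rw [pw, if_neg h, if_pos hk]

lemma pw_step (m n : ℕ) (hn : 1 ≤ n) (i : ℕ) (hi : i < n) :
    SQ m (n+1) (pw n i) ≤ SQ m (n+1) (pw n (i+1)) := by
  have hin : i + 1 < n + 1 := by omega
  set p : Fin (n+1) := ⟨i+1, hin⟩ with hp
  set q : Fin (n+1) := ⟨0, by omega⟩ with hq
  have hpv : (p:ℕ) = i+1 := rfl
  have hqv : (q:ℕ) = 0 := rfl
  have hpq : p ≠ q := by
    intro h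
    have : (p:ℕ) = (q:ℕ) := congrArg Fin.val h
    rw [hpv, hqv] at this
    omega
  set x : ℝ := Real.sqrt (1/n) with hx
  set y : ℝ := Real.sqrt (i/(n*(n+1))) with hy
  set x' : ℝ := Real.sqrt (1/(n+1)) with hx'
  set y' : ℝ := Real.sqrt ((i+1)/(n*(n+1))) with hy'
  have hwA : Function.update (Function.update (pw n i) p x) q y = pw n i := by
    have h1 : (pw n i) p = x := by
      rw [pw, hpv, if_neg (by omega : ¬ (i+1 = 0)), if_neg (by omega : ¬ (i+1 ≤ i))]
    have h2 : (pw n i) q = y := by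
      rw [pw, hqv, if_pos rfl]
    nth_rewrite 2 [← Function.update_eq_self q (pw n i)]
    rw [h2]
    congr 1
    nth_rewrite 2 [← Function.update_eq_self p (pw n i)]
    rw [h1]
  have hwB : Function.update (Function.update (pw n i) p x') q y' = pw n (i+1) := by
    funext k
    by_cases hk0 : k = q
    · subst hk0
      rw [Function.update_self, pw, hqv, if_pos rfl, hy']
      push_cast
      ring_nf
    · rw [Function.update_of_ne hk0]
      have hk0' : (k:ℕ) ≠ 0 := by
        intro h
        exact hk0 (Fin.ext (h.trans hqv.symm))
      by_cases hkp : k = p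
      · subst hkp
        rw [Function.update_self, pw, hpv, if_neg (by omega : ¬(i+1 = 0)),
            if_pos (by omega : i+1 ≤ i+1)]
      · rw [Function.update_of_ne hkp]
        have hkp' : (k:ℕ) ≠ i+1 := by
          intro h
          exact hkp (Fin.ext (h.trans hpv.symm))
        rw [pw, pw, if_neg hk0', if_neg hk0']
        by_cases hki : (k:ℕ) ≤ i
        · rw [if_pos hki, if_pos (by omega)]
        · rw [if_neg hki, if_neg (by omega)]
  rw [← hwA, ← hwB]
  have hnR : (1:ℝ) ≤ (n:ℝ) := by exact_mod_cast hn
  have hiR : (i:ℝ) + 1 ≤ (n:ℝ) := by exact_mod_cast hi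
  have hiR0 : (0:ℝ) ≤ (i:ℝ) := by positivity
  have sx : x^2 = 1/(n:ℝ) := Real.sq_sqrt (by positivity)
  have sy : y^2 = (i:ℝ)/(n*(n+1)) := Real.sq_sqrt (by positivity)
  have sx' : x'^2 = 1/((n:ℝ)+1) := Real.sq_sqrt (by positivity)
  have sy' : y'^2 = ((i:ℝ)+1)/(n*(n+1)) := by
    rw [hy']
    push_cast
    exact Real.sq_sqrt (by positivity)
  apply swapMono m (n+1) (pw n i) p q hpq
  · rw [sx, sy, sx', sy']
    rw [div_add_div _ _ (by positivity) (by positivity),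
        div_add_div _ _ (by positivity) (by positivity)]
    rw [div_eq_div_iff (by positivity) (by positivity)]
    ring
  · rw [mul_pow, mul_pow, sx, sy, sx', sy']
    rw [div_mul_div_comm, div_mul_div_comm]
    rw [div_le_div_iff₀ (by positivity) (by positivity)]
    have key : (i:ℝ)*((n:ℝ)+1) ≤ ((i:ℝ)+1)*n := by nlinarith
    nlinarith [mul_le_mul_of_nonneg_right key (show (0:ℝ) ≤ (n:ℝ)*((n:ℝ)+1) by positivity)]

lemma pw_first (m n : ℕ) :
    SQ m (n+1) (pw n 0) = 2 * SQ m n (fun _ => Real.sqrt (1/n)) := by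
  rw [pw_zero, SQ_succ_split]
  have hterm : ∀ b : Bool, ∀ ε : Fin n → Bool,
      (sgnR b * (if ((0 : Fin (n+1)):ℕ) = 0 then (0:ℝ) else Real.sqrt (1/n))
        + ∑ j : Fin n, sgnR (ε j) * (if ((j.succ : Fin (n+1)):ℕ) = 0 then (0:ℝ) else Real.sqrt (1/n)))
      = ∑ j : Fin n, sgnR (ε j) * Real.sqrt (1/n) := by
    intro b ε
    have h0 : ((0 : Fin (n+1)):ℕ) = 0 := rfl
    rw [if_pos h0, mul_zero, zero_add]
    apply Finset.sum_congr rfl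
    intro j _
    have : ((j.succ : Fin (n+1)):ℕ) = (j:ℕ)+1 := rfl
    rw [this]
    rw [if_neg (by omega)]
  have : ∀ b : Bool, (∑ ε : Fin n → Bool,
      (sgnR b * (if ((0 : Fin (n+1)):ℕ) = 0 then (0:ℝ) else Real.sqrt (1/n))
        + ∑ j : Fin n, sgnR (ε j) * (if ((j.succ : Fin (n+1)):ℕ) = 0 then (0:ℝ) else Real.sqrt (1/n)))^(2*m))
      = SQ m n (fun _ => Real.sqrt (1/n)) := by
    intro b
    apply Finset.sum_congr rfl
    intro ε _
    rw [hterm b ε]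
  rw [Fintype.sum_bool]
  rw [this true, this false]
  ring

lemma pw_chain (m n : ℕ) (hn : 1 ≤ n) : ∀ i, i ≤ n →
    SQ m (n+1) (pw n 0) ≤ SQ m (n+1) (pw n i) := by
  intro i
  induction i with
  | zero => intro _; exact le_refl _
  | succ i ih =>
      intro hi
      exact le_trans (ih (by omega)) (pw_step m n hn i (by omega))

lemma sum_conv (N : ℕ) (ε : Fin N → Bool) :
    (∑ j, (if ε j then (1:ℝ) else -1)) / Real.sqrt N = ∑ j, sgnR (ε j) * Real.sqrt (1/N) := by
  rw [Finset.sum_div]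
  apply Finset.sum_congr rfl
  intro j _
  have hs : Real.sqrt (1/(N:ℝ)) = 1 / Real.sqrt N := by
    rw [one_div, one_div, Real.sqrt_inv]
  rw [hs, sgnR]
  cases ε j <;> simp <;> ring

lemma E_mono_step (m n : ℕ) (hn : 1 ≤ n) :
    (1/2^n : ℝ) * ∑ ε : Fin n → Bool, ((∑ j, (if ε j then (1:ℝ) else -1)) / Real.sqrt n)^(2*m)
    ≤ (1/2^(n+1) : ℝ) * ∑ ε : Fin (n+1) → Bool,
        ((∑ j, (if ε j then (1:ℝ) else -1)) / Real.sqrt (n+1))^(2*m) := by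
  have hL : (∑ ε : Fin n → Bool, ((∑ j, (if ε j then (1:ℝ) else -1)) / Real.sqrt n)^(2*m))
      = SQ m n (fun _ => Real.sqrt (1/n)) := by
    apply Finset.sum_congr rfl
    intro ε _
    rw [sum_conv n ε]
  have hR : (∑ ε : Fin (n+1) → Bool, ((∑ j, (if ε j then (1:ℝ) else -1)) / Real.sqrt (n+1))^(2*m))
      = SQ m (n+1) (pw n n) := by
    rw [pw_last n hn]
    apply Finset.sum_congr rfl
    intro ε _
    have := sum_conv (n+1) ε
    push_cast at this ⊢
    rw [this]
  rw [hL, hR]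
  have h1 : SQ m (n+1) (pw n 0) ≤ SQ m (n+1) (pw n n) := pw_chain m n hn n (le_refl n)
  rw [pw_first] at h1
  have h2 : (0:ℝ) < 2^(n+1) := by positivity
  have h3 : (0:ℝ) < 2^n := by positivity
  rw [div_mul_eq_mul_div, div_mul_eq_mul_div, one_mul, one_mul, div_le_div_iff₀ h3 h2]
  calc SQ m n (fun _ => Real.sqrt (1/n)) * 2^(n+1)
      = (2 * SQ m n (fun _ => Real.sqrt (1/n))) * 2^n := by ring
    _ ≤ SQ m (n+1) (pw n n) * 2^n := by
        apply mul_le_mul_of_nonneg_right h1 (le_of_lt h3)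

noncomputable def AA (m n : ℕ) : ℝ := SQ m n (fun _ => 1)

lemma AA_nonneg (m n : ℕ) : 0 ≤ AA m n := by
  apply Finset.sum_nonneg
  intro ε _
  rw [pow_mul]
  exact pow_nonneg (sq_nonneg _) m

lemma AA_zero_n (m : ℕ) : AA m 0 = (0:ℝ)^(2*m) := by
  rw [AA, SQ]
  rw [Fintype.sum_unique]
  simp

lemma AA_m_zero (n : ℕ) : AA 0 n = 2^n := by
  rw [AA, SQ]
  have : ∀ ε : Fin n → Bool, (∑ j, sgnR (ε j) * 1) ^ (2*0) = 1 := by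
    intro ε; norm_num
  rw [Finset.sum_congr rfl (fun ε _ => this ε)]
  simp [Finset.card_univ]

lemma AA_rec (m n : ℕ) :
    AA m (n+1) = ∑ r ∈ range (m+1), 2 * (Nat.choose (2*m) (2*r) : ℝ) * AA (m-r) n := by
  rw [AA, SQ_succ_split]
  have hsplit : ∀ b : Bool, ∀ ε : Fin n → Bool,
      (sgnR b * (1:ℝ) + ∑ j : Fin n, sgnR (ε j) * (1:ℝ)) = (∑ j : Fin n, sgnR (ε j) * 1) + sgnR b := by
    intro b ε; ring
  rw [Fintype.sum_bool]
  have htrue : ∀ ε : Fin n → Bool, (sgnR true * (1:ℝ) + ∑ j : Fin n, sgnR (ε j) * 1)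
      = (∑ j : Fin n, sgnR (ε j) * 1) + 1 := by
    intro ε; rw [hsplit]; simp [sgnR]
  have hfalse : ∀ ε : Fin n → Bool, (sgnR false * (1:ℝ) + ∑ j : Fin n, sgnR (ε j) * 1)
      = (∑ j : Fin n, sgnR (ε j) * 1) - 1 := by
    intro ε; rw [hsplit]; simp [sgnR]; ring
  calc (∑ ε : Fin n → Bool, (sgnR true * (1:ℝ) + ∑ j : Fin n, sgnR (ε j) * 1)^(2*m))
        + (∑ ε : Fin n → Bool, (sgnR false * (1:ℝ) + ∑ j : Fin n, sgnR (ε j) * 1)^(2*m))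
      = ∑ ε : Fin n → Bool, (((∑ j : Fin n, sgnR (ε j) * 1) + 1)^(2*m)
          + ((∑ j : Fin n, sgnR (ε j) * 1) - 1)^(2*m)) := by
        rw [← Finset.sum_add_distrib]
        apply Finset.sum_congr rfl
        intro ε _
        rw [htrue ε, hfalse ε]
    _ = ∑ ε : Fin n → Bool, ∑ r ∈ range (m+1),
          2 * (Nat.choose (2*m) (2*r) : ℝ) * ((∑ j : Fin n, sgnR (ε j) * 1))^(2*m-2*r) * 1^(2*r) := by
        apply Finset.sum_congr rfl
        intro ε _
        exact pm_expand m _ 1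
    _ = ∑ r ∈ range (m+1), ∑ ε : Fin n → Bool,
          2 * (Nat.choose (2*m) (2*r) : ℝ) * ((∑ j : Fin n, sgnR (ε j) * 1))^(2*m-2*r) * 1^(2*r) := by
        rw [Finset.sum_comm]
    _ = ∑ r ∈ range (m+1), 2 * (Nat.choose (2*m) (2*r) : ℝ) * AA (m-r) n := by
        apply Finset.sum_congr rfl
        intro r hr
        have hexp : 2*m - 2*r = 2*(m-r) := by rw [Nat.mul_sub]
        rw [AA, SQ, Finset.mul_sum]
        apply Finset.sum_congr rfl
        intro ε _
        rw [hexp, one_pow, mul_one]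

def df : ℕ → ℕ
  | 0 => 1
  | (m+1) => (2*m+1) * df m

lemma df_pos (m : ℕ) : 1 ≤ df m := by
  induction m with
  | zero => exact le_refl 1
  | succ m ih => calc 1 ≤ df m := ih
                 _ ≤ (2*m+1) * df m := Nat.le_mul_of_pos_left _ (by omega)

lemma dfE (m : ℕ) : df m * 2^m * m.factorial = (2*m).factorial := by
  induction m with
  | zero => rfl
  | succ m ih =>
      have h4 : (2*(m+1)).factorial = (2*(m+1)) * ((2*m+1) * (2*m).factorial) := by
        rw [show 2*(m+1) = (2*m+1)+1 by ring, Nat.factorial_succ, Nat.factorial_succ]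
      rw [h4, ← ih, df, Nat.factorial_succ]
      ring

lemma CB (m r : ℕ) (hr : r ≤ m) :
    (2*m).choose (2*r) * df (m-r) * df r = df m * m.choose r := by
  have hK : 0 < 2^m * (r.factorial * (m-r).factorial) := by positivity
  apply Nat.eq_of_mul_eq_mul_right hK
  have h2r : 2*r ≤ 2*m := by omega
  have hsub : 2*m - 2*r = 2*(m-r) := by omega
  have e1 : (2*m).choose (2*r) * df (m-r) * df r * (2^m * (r.factorial * (m-r).factorial))
      = (2*m).choose (2*r) * ((df (m-r) * 2^(m-r) * (m-r).factorial) * (df r * 2^r * r.factorial)) := by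
    have hp : 2^(m-r) * 2^r = 2^m := by
      rw [← pow_add, Nat.sub_add_cancel hr]
    calc (2*m).choose (2*r) * df (m-r) * df r * (2^m * (r.factorial * (m-r).factorial))
        = (2*m).choose (2*r) * (df (m-r) * df r * ((2^(m-r) * 2^r) * (r.factorial * (m-r).factorial))) := by
          rw [hp]; ring
      _ = (2*m).choose (2*r) * (df (m-r) * 2^(m-r) * (m-r).factorial * (df r * 2^r * r.factorial)) := by
          ring
  rw [e1, dfE, dfE]
  have e2 : (2*m).choose (2*r) * ((2*(m-r)).factorial * (2*r).factorial)
      = (2*m).factorial := by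
    rw [← hsub]
    have := Nat.choose_mul_factorial_mul_factorial h2r
    calc (2*m).choose (2*r) * ((2*m - 2*r).factorial * (2*r).factorial)
        = (2*m).choose (2*r) * (2*r).factorial * (2*m - 2*r).factorial := by ring
      _ = (2*m).factorial := this
  rw [e2]
  have e3 : df m * m.choose r * (2^m * (r.factorial * (m-r).factorial))
      = (df m * 2^m) * (m.choose r * r.factorial * (m-r).factorial) := by ring
  rw [e3, Nat.choose_mul_factorial_mul_factorial hr, mul_assoc, ← mul_assoc, dfE m]

lemma CBle (m r : ℕ) (hr : r ≤ m) :
    (2*m).choose (2*r) * df (m-r) ≤ df m * m.choose r := by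
  calc (2*m).choose (2*r) * df (m-r)
      ≤ (2*m).choose (2*r) * df (m-r) * df r := Nat.le_mul_of_pos_right _ (df_pos r)
    _ = df m * m.choose r := CB m r hr

lemma choose2 (M : ℕ) : (2*(M+1)).choose 2 = (M+1)*(2*M+1) := by
  rw [Nat.choose_two_right]
  have h1 : 2*(M+1) - 1 = 2*M+1 := by omega
  rw [h1]
  rw [show 2*(M+1)*(2*M+1) = 2*((M+1)*(2*M+1)) by ring]
  exact Nat.mul_div_cancel_left _ (by norm_num)

lemma descFact_step (n M : ℕ) :
    (n+1).descFactorial (M+1) = n.descFactorial (M+1) + (M+1) * n.descFactorial M := by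
  rcases le_or_gt M n with h | h
  · rw [Nat.succ_descFactorial_succ, Nat.descFactorial_succ]
    have h2 : (n - M) + (M+1) = n+1 := by omega
    calc (n+1) * n.descFactorial M = ((n-M) + (M+1)) * n.descFactorial M := by rw [h2]
      _ = (n-M)*n.descFactorial M + (M+1)*n.descFactorial M := by ring
  · have h1 : n.descFactorial (M+1) = 0 := Nat.descFactorial_eq_zero_iff_lt.2 (by omega)
    have h2 : n.descFactorial M = 0 := Nat.descFactorial_eq_zero_iff_lt.2 h
    rw [Nat.succ_descFactorial_succ, h1, h2]
    simp

lemma binexp (M : ℕ) (x : ℝ) : (x+1)^M = ∑ r ∈ range (M+1), (Nat.choose M r : ℝ) * x^(M-r) := by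
  rw [add_comm, add_pow]
  apply Finset.sum_congr rfl
  intro r _
  rw [one_pow]
  ring

lemma AA_upper : ∀ n m : ℕ, AA m n ≤ (df m : ℝ) * (n:ℝ)^m * 2^n := by
  intro n
  induction n with
  | zero =>
      intro m
      rw [AA_zero_n]
      cases m with
      | zero => norm_num [df]
      | succ k =>
          rw [show 2*(k+1) = (2*k+1)+1 by ring, pow_succ]
          norm_num
  | succ n ih =>
      intro m
      rw [AA_rec]
      have step1 : ∀ r ∈ range (m+1),
          2 * (Nat.choose (2*m) (2*r) : ℝ) * AA (m-r) n
            ≤ 2 * ((df m : ℝ) * (Nat.choose m r : ℝ)) * ((n:ℝ)^(m-r) * 2^n) := by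
        intro r hr
        have hrm : r ≤ m := by
          rw [Finset.mem_range] at hr; omega
        have h1 : AA (m-r) n ≤ (df (m-r) : ℝ) * (n:ℝ)^(m-r) * 2^n := ih (m-r)
        have h2 : ((2*m).choose (2*r) * df (m-r) : ℝ) ≤ ((df m * m.choose r : ℝ)) := by
          exact_mod_cast Nat.cast_le.2 (CBle m r hrm)
        calc 2 * (Nat.choose (2*m) (2*r) : ℝ) * AA (m-r) n
            ≤ 2 * (Nat.choose (2*m) (2*r) : ℝ) * ((df (m-r) : ℝ) * (n:ℝ)^(m-r) * 2^n) := by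
              apply mul_le_mul_of_nonneg_left h1 (by positivity)
          _ = 2 * (((2*m).choose (2*r) : ℝ) * (df (m-r) : ℝ)) * ((n:ℝ)^(m-r) * 2^n) := by ring
          _ ≤ 2 * ((df m : ℝ) * (Nat.choose m r : ℝ)) * ((n:ℝ)^(m-r) * 2^n) := by
              apply mul_le_mul_of_nonneg_right _ (by positivity)
              apply mul_le_mul_of_nonneg_left _ (by norm_num)
              push_cast at h2 ⊢
              exact h2
      calc (∑ r ∈ range (m+1), 2 * (Nat.choose (2*m) (2*r) : ℝ) * AA (m-r) n)
          ≤ ∑ r ∈ range (m+1), 2 * ((df m : ℝ) * (Nat.choose m r : ℝ)) * ((n:ℝ)^(m-r) * 2^n) :=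
            Finset.sum_le_sum step1
        _ = (df m : ℝ) * 2^(n+1) * ∑ r ∈ range (m+1), (Nat.choose m r : ℝ) * (n:ℝ)^(m-r) := by
            rw [Finset.mul_sum]
            apply Finset.sum_congr rfl
            intro r _
            ring
        _ = (df m : ℝ) * ((n:ℝ)+1)^m * 2^(n+1) := by
            rw [← binexp]
            ring
        _ = (df m : ℝ) * ((n+1 : ℕ):ℝ)^m * 2^(n+1) := by
            push_cast
            ring

lemma AA_lower : ∀ n m : ℕ, (df m : ℝ) * (n.descFactorial m : ℝ) * 2^n ≤ AA m n := by
  intro n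
  induction n with
  | zero =>
      intro m
      cases m with
      | zero =>
          rw [AA_zero_n]
          norm_num [df]
      | succ k =>
          have h1 : (0).descFactorial (k+1) = 0 := Nat.descFactorial_eq_zero_iff_lt.2 (by omega)
          rw [h1]
          push_cast
          rw [mul_zero, zero_mul]
          exact AA_nonneg _ _
  | succ n ih =>
      intro m
      cases m with
      | zero =>
          rw [AA_m_zero]
          simp [df]
      | succ M =>
          rw [AA_rec]
          have hsub : ({0, 1} : Finset ℕ) ⊆ range (M+1+1) := by
            intro t ht
            rw [Finset.mem_insert, Finset.mem_singleton] at ht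
            rw [Finset.mem_range]
            omega
          have hnonneg : ∀ r ∈ range (M+1+1), r ∉ ({0,1} : Finset ℕ) →
              (0:ℝ) ≤ 2 * (Nat.choose (2*(M+1)) (2*r) : ℝ) * AA (M+1-r) n := by
            intro r _ _
            have := AA_nonneg (M+1-r) n
            positivity
          have hdrop := Finset.sum_le_sum_of_subset_of_nonneg hsub hnonneg
          have hpair : (∑ r ∈ ({0,1} : Finset ℕ), 2 * (Nat.choose (2*(M+1)) (2*r) : ℝ) * AA (M+1-r) n)
              = 2 * AA (M+1) n + 2 * ((2*(M+1)).choose 2 : ℝ) * AA M n := by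
            rw [Finset.sum_pair (by norm_num : (0:ℕ) ≠ 1)]
            norm_num
          refine le_trans ?_ (le_trans (le_of_eq hpair.symm) hdrop)
          have ih1 := ih (M+1)
          have ih2 := ih M
          have hch : ((2*(M+1)).choose 2 : ℝ) = ((M+1) : ℝ) * ((2*M+1) : ℝ) := by
            rw [choose2]
            push_cast
            ring
          have hdfs : (df (M+1) : ℝ) = ((2*M+1) : ℝ) * (df M : ℝ) := by
            rw [df]
            push_cast
            ring
          have hdesc : ((n+1).descFactorial (M+1) : ℝ)
              = (n.descFactorial (M+1) : ℝ) + ((M+1) : ℝ) * (n.descFactorial M : ℝ) := by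
            rw [descFact_step]
            push_cast
            ring
          calc (df (M+1) : ℝ) * ((n+1).descFactorial (M+1) : ℝ) * 2^(n+1)
              = 2 * ((df (M+1) : ℝ) * (n.descFactorial (M+1) : ℝ) * 2^n)
                + 2 * (((M+1):ℝ) * ((2*M+1):ℝ)) * ((df M : ℝ) * (n.descFactorial M : ℝ) * 2^n) := by
                rw [hdesc, hdfs]
                ring
            _ ≤ 2 * AA (M+1) n + 2 * (((M+1):ℝ) * ((2*M+1):ℝ)) * AA M n := by
                have t1 : 2 * ((df (M+1) : ℝ) * (n.descFactorial (M+1) : ℝ) * 2^n) ≤ 2 * AA (M+1) n := by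
                  apply mul_le_mul_of_nonneg_left _ (by norm_num)
                  rw [hdfs]
                  push_cast at ih1 ⊢
                  rw [hdfs] at ih1
                  exact ih1
                have t2 : 2 * (((M+1):ℝ) * ((2*M+1):ℝ)) * ((df M : ℝ) * (n.descFactorial M : ℝ) * 2^n)
                    ≤ 2 * (((M+1):ℝ) * ((2*M+1):ℝ)) * AA M n := by
                  apply mul_le_mul_of_nonneg_left ih2 (by positivity)
                linarith
            _ = 2 * AA (M+1) n + 2 * ((2*(M+1)).choose 2 : ℝ) * AA M n := by
                rw [hch]

lemma AA_tendsto (m : ℕ) :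
    Tendsto (fun n : ℕ => AA m n / (2^n * (n:ℝ)^m)) atTop (nhds ((df m : ℝ))) := by
  have hprod : Tendsto (fun n : ℕ => (df m : ℝ) * ∏ i ∈ range m, (1 - (i:ℝ)/n)) atTop
      (nhds ((df m : ℝ))) := by
    have h1 : Tendsto (fun n : ℕ => ∏ i ∈ range m, (1 - (i:ℝ)/n)) atTop
        (nhds (∏ i ∈ range m, (1:ℝ))) := by
      apply tendsto_finset_prod
      intro i _
      have h2 : Tendsto (fun n : ℕ => (i:ℝ)/n) atTop (nhds 0) :=
        tendsto_const_div_atTop_nhds_zero_nat (i:ℝ)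
      have h3 := (tendsto_const_nhds (x := (1:ℝ)) (f := atTop)).sub h2
      simpa using h3
    rw [Finset.prod_const_one] at h1
    have := h1.const_mul (df m : ℝ)
    simpa using this
  -- the lower bound sequence eventually equals df * prod
  have heq : ∀ᶠ n : ℕ in atTop,
      (df m : ℝ) * ∏ i ∈ range m, (1 - (i:ℝ)/n)
        = (df m : ℝ) * (n.descFactorial m : ℝ) / (n:ℝ)^m := by
    filter_upwards [eventually_ge_atTop (max m 1)] with n hn
    have hm : m ≤ n := le_trans (le_max_left m 1) hn
    have h1 : 1 ≤ n := le_trans (le_max_right m 1) hn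
    have hn0 : (n:ℝ) ≠ 0 := by
      have : (1:ℝ) ≤ (n:ℝ) := by exact_mod_cast h1
      linarith
    have hcast : (n.descFactorial m : ℝ) = ∏ i ∈ range m, ((n:ℝ) - i) := by
      rw [Nat.descFactorial_eq_prod_range]
      rw [Nat.cast_prod]
      apply Finset.prod_congr rfl
      intro i hi
      rw [Finset.mem_range] at hi
      have : i ≤ n := le_trans (le_of_lt hi) hm
      exact Nat.cast_sub this
    rw [hcast]
    have hpow : (n:ℝ)^m = ∏ _i ∈ range m, (n:ℝ) := by
      rw [Finset.prod_const, Finset.card_range]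
    rw [mul_div_assoc, hpow, ← Finset.prod_div_distrib]
    congr 1
    apply Finset.prod_congr rfl
    intro i _
    field_simp
  have hLtendsto : Tendsto (fun n : ℕ => (df m : ℝ) * (n.descFactorial m : ℝ) / (n:ℝ)^m) atTop
      (nhds ((df m : ℝ))) := by
    apply hprod.congr'
    exact heq
  apply tendsto_of_tendsto_of_tendsto_of_le_of_le' hLtendsto tendsto_const_nhds
  · -- lower bound
    filter_upwards [eventually_ge_atTop 1] with n hn
    have hn0 : (0:ℝ) < (n:ℝ) := by exact_mod_cast hn
    have hd : (0:ℝ) < 2^n * (n:ℝ)^m := by positivity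
    rw [div_le_div_iff₀ (by positivity) hd]
    calc (df m : ℝ) * (n.descFactorial m : ℝ) * (2^n * (n:ℝ)^m)
        = ((df m : ℝ) * (n.descFactorial m : ℝ) * 2^n) * (n:ℝ)^m := by ring
      _ ≤ AA m n * (n:ℝ)^m := by
          apply mul_le_mul_of_nonneg_right (AA_lower n m) (by positivity)
  · -- upper bound
    filter_upwards [eventually_ge_atTop 1] with n hn
    have hn0 : (0:ℝ) < (n:ℝ) := by exact_mod_cast hn
    have hd : (0:ℝ) < 2^n * (n:ℝ)^m := by positivity
    rw [div_le_iff₀ hd]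
    calc AA m n ≤ (df m : ℝ) * (n:ℝ)^m * 2^n := AA_upper n m
      _ = (df m : ℝ) * (2^n * (n:ℝ)^m) := by ring

lemma E_eq (m n : ℕ) (hn : 1 ≤ n) :
    (1 / 2 ^ n : ℝ) * ∑ ε : Fin n → Bool,
        ((∑ j, (if ε j then (1 : ℝ) else -1)) / Real.sqrt n) ^ (2 * m)
      = AA m n / (2^n * (n:ℝ)^m) := by
  have hn0 : (0:ℝ) < (n:ℝ) := by exact_mod_cast hn
  have hsq : (Real.sqrt n)^(2*m) = (n:ℝ)^m := by
    rw [pow_mul, Real.sq_sqrt (le_of_lt hn0)]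
  have hterm : ∀ ε : Fin n → Bool,
      ((∑ j, (if ε j then (1 : ℝ) else -1)) / Real.sqrt n) ^ (2 * m)
        = (∑ j, sgnR (ε j) * (1:ℝ)) ^ (2*m) / (n:ℝ)^m := by
    intro ε
    rw [div_pow, hsq]
    congr 2
    apply Finset.sum_congr rfl
    intro j _
    rw [mul_one, sgnR]
  rw [Finset.sum_congr rfl (fun ε _ => hterm ε), ← Finset.sum_div]
  rw [show (∑ ε : Fin n → Bool, (∑ j, sgnR (ε j) * (1:ℝ)) ^ (2*m)) = AA m n from rfl]
  rw [div_mul_div_comm, one_mul]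

/-- For an even integer exponent `p = 2m ≥ 4`, the moments
`E[((r_1+⋯+r_n)/√n)^(2m)]` of normalized Rademacher sums are increasing in `n`
and converge to `(2m)!/(2^m m!)`, the `2m`-th moment of a standard Gaussian. -/
theorem stmt_19 (m : ℕ) (hm : 2 ≤ m)
    (E : ℕ → ℝ)
    (hE : ∀ n : ℕ, E n =
      (1 / 2 ^ n : ℝ) *
        ∑ ε : Fin n → Bool,
          ((∑ j, (if ε j then (1 : ℝ) else -1)) / Real.sqrt n) ^ (2 * m)) :
    (∀ n : ℕ, 1 ≤ n → E n ≤ E (n + 1)) ∧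
      Filter.Tendsto E Filter.atTop
        (nhds ((Nat.factorial (2 * m) : ℝ) / (2 ^ m * Nat.factorial m))) := by
  constructor
  · intro n hn
    rw [hE n, hE (n+1)]
    have h := E_mono_step m n hn
    have hcast : ((n+1 : ℕ):ℝ) = (n:ℝ)+1 := by push_cast; ring
    rw [hcast]
    exact h
  · have hval : ((Nat.factorial (2 * m) : ℝ) / (2 ^ m * Nat.factorial m)) = (df m : ℝ) := by
      have h1 : (df m : ℝ) * (2^m * (Nat.factorial m : ℝ)) = (Nat.factorial (2*m) : ℝ) := by
        have := dfE m
        push_cast [← this]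
        ring
      rw [← h1]
      have h2 : (2:ℝ)^m * (Nat.factorial m : ℝ) ≠ 0 := by positivity
      field_simp
    rw [hval]
    apply (AA_tendsto m).congr'
    filter_upwards [eventually_ge_atTop 1] with n hn
    rw [hE n, E_eq m n hn]
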